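/- arXiv:2007.15368 — 2 statements merged into one kernel-verified Lean document; each statement's English description precedes it below -/
import Mathlib

section
/- Let G be a finite simple graph of order n with r = χ(G), where n is NOT congruent to r − 1 modulo r, and suppose es_χ(G) = ⌊n/r⌋². Then for every proper coloring of G with exactly r color classes C_1, …, C_r ordered so that |C_1| ≤ ⋯ ≤ |C_r|, the following hold for each i: if |C_i| = ⌊n/r⌋, then every vertex v ∈ C_i and every j ∈ {1, …, r} \ {i} satisfy e(v, C_j) ≥ ⌊n/r⌋; and if |C_i| > ⌊n/r⌋, then Σ_{v_s ∈ C_i} ℓ_s ≥ ⌊n/r⌋², where for each v_s ∈ C_i, ℓ_s = min{ e(v_s, C_j) : j ∈ {1, …, r} \ {i} } and e(v, C_j) is the number of edges from v to vertices of C_j. -/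
open Function

/-- The chromatic-stability index: the minimum number of edges whose removal
decreases the chromatic number (0 if no such edge set exists, e.g. for edgeless graphs). -/
noncomputable def esChi {V : Type*} [Fintype V] (G : SimpleGraph V) : ℕ :=
  sInf {k | ∃ F : Finset (Sym2 V),
    ↑F ⊆ G.edgeSet ∧ F.card = k ∧
    (G.deleteEdges ↑F).chromaticNumber < G.chromaticNumber}

open scoped Classical in
/-- The color class of color `i` under the coloring `c`, as a `Finset`. -/
noncomputable def classOf {V : Type*} [Fintype V] {G : SimpleGraph V} {α : Type*}
    (c : G.Coloring α) (i : α) : Finset V :=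
  Finset.univ.filter fun v => c v = i

open scoped Classical in
/-- The number of edges of `G` with one endpoint in `A` and the other in `B`
(for disjoint `A`, `B`). -/
noncomputable def eCC {V : Type*} [Fintype V] (G : SimpleGraph V) (A B : Finset V) : ℕ :=
  ((A ×ˢ B).filter fun p => G.Adj p.1 p.2).card

/-- `c*`: the minimum size of a color class over all proper colorings of `G`
using exactly `χ(G)` colors. -/
noncomputable def cStar {V : Type*} [Fintype V] (G : SimpleGraph V) : ℕ :=
  sInf {k | ∃ (c : G.Coloring (Fin G.chromaticNumber.toNat))
      (i : Fin G.chromaticNumber.toNat),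
    Surjective c ∧ k = (classOf c i).card}

/-- The chromatic bondage number: the minimum number of edges between two distinct
color classes, over all proper colorings of `G` using exactly `χ(G)` colors. -/
noncomputable def rhoChi {V : Type*} [Fintype V] (G : SimpleGraph V) : ℕ :=
  sInf {k | ∃ (c : G.Coloring (Fin G.chromaticNumber.toNat))
      (i j : Fin G.chromaticNumber.toNat),
    Surjective c ∧ i ≠ j ∧ k = eCC G (classOf c i) (classOf c j)}

open scoped Classical in
lemma eCC_singleton' {V : Type*} [Fintype V] (G : SimpleGraph V) (v : V) (B : Finset V) :
    eCC G {v} B = (B.filter fun w => G.Adj v w).card := by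
  simp only [eCC, Finset.singleton_product, Finset.filter_map, Finset.card_map]
  congr 1

/-- If `n ≢ r − 1 (mod r)` where `r = χ(G)` and `es_χ(G) = ⌊n/r⌋²`,
then in every proper coloring of `G` with exactly `r` color classes ordered by
nondecreasing size: for each `i`, if `|C_i| = ⌊n/r⌋` then every `v ∈ C_i` sends at
least `⌊n/r⌋` edges to each other class; and if `|C_i| > ⌊n/r⌋` then
`Σ_{v ∈ C_i} ℓ_v ≥ ⌊n/r⌋²`, where `ℓ_v = min{e(v, C_j) : j ≠ i}`. -/

theorem extremal_coloring_edge_sums {V : Type*} [Fintype V] (G : SimpleGraph V)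
    (r : ℕ) (hchi : G.chromaticNumber = r)
    (hmod : Fintype.card V % r ≠ r - 1)
    (hes : esChi G = (Fintype.card V / r) ^ 2) :
    ∀ c : G.Coloring (Fin r), Surjective c →
      (∀ i j : Fin r, i ≤ j → (classOf c i).card ≤ (classOf c j).card) →
      ∀ i : Fin r,
        ((classOf c i).card = Fintype.card V / r →
          ∀ v ∈ classOf c i, ∀ j : Fin r, j ≠ i →
            Fintype.card V / r ≤ eCC G {v} (classOf c j)) ∧
        (Fintype.card V / r < (classOf c i).card →
          (Fintype.card V / r) ^ 2 ≤
            ∑ v ∈ classOf c i,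
              sInf {k : ℕ | ∃ j : Fin r, j ≠ i ∧ k = eCC G {v} (classOf c j)}) := by
  classical
  intro c hsurj hmono i
  have hr0 : r ≠ 0 := by rintro rfl; exact i.elim0
  have hr1 : r ≠ 1 := by rintro rfl; exact hmod (Nat.mod_one _)
  have hr2 : 2 ≤ r := by omega
  have hrpos : 0 < r := by omega
  set n := Fintype.card V with hn
  set q := n / r with hq
  -- choose for each vertex a nearest other class
  obtain ⟨j1, hj1⟩ : ∃ j : Fin r, j ≠ i := by
    have h1 : 1 < Fintype.card (Fin r) := by rw [Fintype.card_fin]; omega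
    obtain ⟨j, hj⟩ := Fintype.exists_ne_of_one_lt_card h1 i
    exact ⟨j, hj⟩
  have hSne : ∀ v : V,
      {k : ℕ | ∃ j : Fin r, j ≠ i ∧ k = eCC G {v} (classOf c j)}.Nonempty :=
    fun v => ⟨_, j1, hj1, rfl⟩
  have hmem := fun v => Nat.sInf_mem (hSne v)
  choose jv hjvne hjveq using hmem
  -- the edge set to delete
  set F : Finset (Sym2 V) :=
    (classOf c i).biUnion (fun v =>
      ((classOf c (jv v)).filter fun w => G.Adj v w).image fun w => s(v, w)) with hF
  have hFsub : ↑F ⊆ G.edgeSet := by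
    intro e he
    rw [Finset.mem_coe] at he
    simp only [hF, Finset.mem_biUnion, Finset.mem_image, Finset.mem_filter] at he
    obtain ⟨v, hv, w, ⟨hw, hadj⟩, rfl⟩ := he
    rwa [SimpleGraph.mem_edgeSet]
  have hFcard : F.card ≤ ∑ v ∈ classOf c i,
      sInf {k : ℕ | ∃ j : Fin r, j ≠ i ∧ k = eCC G {v} (classOf c j)} := by
    refine (Finset.card_biUnion_le).trans (Finset.sum_le_sum fun v hv => ?_)
    calc (((classOf c (jv v)).filter fun w => G.Adj v w).image fun w => s(v, w)).card
        ≤ ((classOf c (jv v)).filter fun w => G.Adj v w).card := Finset.card_image_le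
      _ = eCC G {v} (classOf c (jv v)) := (eCC_singleton' G v _).symm
      _ = _ := (hjveq v).symm
  -- the recoloring
  have hcol : (G.deleteEdges ↑F).Colorable (r - 1) := by
    have hcard : Fintype.card {j : Fin r // j ≠ i} = r - 1 := by
      simp [Fintype.card_subtype_compl]
    have C' : (G.deleteEdges ↑F).Coloring {j : Fin r // j ≠ i} :=
      SimpleGraph.Coloring.mk
        (fun v => if h : c v = i then ⟨jv v, hjvne v⟩ else ⟨c v, h⟩)
        (by
          intro v w hvw
          rw [SimpleGraph.deleteEdges_adj] at hvw
          obtain ⟨hadj, hnF⟩ := hvw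
          have hne : c v ≠ c w := c.valid hadj
          by_cases h1 : c v = i <;> by_cases h2 : c w = i
          · exact absurd (h1.trans h2.symm) hne
          · simp only [dif_pos h1, dif_neg h2]
            intro hcon
            apply hnF
            have hval : jv v = c w := congrArg Subtype.val hcon
            rw [Finset.mem_coe]
            simp only [hF, Finset.mem_biUnion]
            refine ⟨v, by simp [classOf, h1],
              Finset.mem_image.mpr ⟨w, Finset.mem_filter.mpr ⟨by simp [classOf, hval.symm], hadj⟩, rfl⟩⟩
          · simp only [dif_neg h1, dif_pos h2]
            intro hcon
            apply hnF
            have hval : jv w = c v := (congrArg Subtype.val hcon).symm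
            rw [Finset.mem_coe, Sym2.eq_swap]
            simp only [hF, Finset.mem_biUnion]
            refine ⟨w, by simp [classOf, h2],
              Finset.mem_image.mpr ⟨v, Finset.mem_filter.mpr ⟨by simp [classOf, hval.symm], hadj.symm⟩, rfl⟩⟩
          · simp only [dif_neg h1, dif_neg h2]
            exact fun hcon => hne (congrArg Subtype.val hcon))
    simpa [hcard] using C'.colorable
  have hlt : (G.deleteEdges ↑F).chromaticNumber < G.chromaticNumber := by
    rw [hchi]
    calc (G.deleteEdges ↑F).chromaticNumber ≤ ((r - 1 : ℕ) : ℕ∞) :=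
          hcol.chromaticNumber_le
      _ < (r : ℕ∞) := by exact_mod_cast Nat.sub_lt hrpos one_pos
  have hes_le : esChi G ≤ F.card := by
    unfold esChi
    exact Nat.sInf_le ⟨F, hFsub, rfl, hlt⟩
  have L1 : q ^ 2 ≤ ∑ v ∈ classOf c i,
      sInf {k : ℕ | ∃ j : Fin r, j ≠ i ∧ k = eCC G {v} (classOf c j)} :=
    hes ▸ (hes_le.trans hFcard)
  refine ⟨?_, fun _ => L1⟩
  intro hcq v0 hv0 j0 hj0
  by_contra hcon
  push_neg at hcon
  have hq1 : 1 ≤ q := by omega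
  -- total count of vertices
  have hsum_classes : ∑ k : Fin r, (classOf c k).card = n := by
    rw [hn, ← Finset.card_univ,
      Finset.card_eq_sum_card_fiberwise (f := c) (t := Finset.univ) (fun x _ => Finset.mem_univ _)]
    refine Finset.sum_congr rfl fun k _ => ?_
    congr 1
    ext v
    simp [classOf]
  -- there is a small class other than i
  obtain ⟨k, hkne, hksmall⟩ : ∃ k : Fin r, k ≠ i ∧ (classOf c k).card ≤ q := by
    by_contra hcon2
    push_neg at hcon2
    have hbig : ∀ k ∈ Finset.univ.erase i, q + 1 ≤ (classOf c k).card :=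
      fun k hk => hcon2 k (Finset.ne_of_mem_erase hk)
    have hge := Finset.card_nsmul_le_sum (Finset.univ.erase i) _ (q + 1) hbig
    rw [Finset.card_erase_of_mem (Finset.mem_univ i), Finset.card_univ, Fintype.card_fin,
      smul_eq_mul] at hge
    have hsplit := Finset.add_sum_erase Finset.univ (fun k : Fin r => (classOf c k).card)
      (Finset.mem_univ i)
    rw [hsum_classes] at hsplit
    obtain ⟨m, hm⟩ : ∃ m, r = m + 1 := ⟨r - 1, by omega⟩
    have e1 : r - 1 = m := by omega
    have e2 : r * q = m * q + q := by rw [hm]; ring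
    have e3 : m * (q + 1) = m * q + m := by ring
    rw [e1, e3] at hge
    have hdm : n = r * q + n % r := by rw [hq]; exact (Nat.div_add_mod n r).symm
    rw [e2] at hdm
    have hmodlt : n % r < m := by
      have h5 : n % r < r := Nat.mod_lt n hrpos
      omega
    rw [hcq] at hsplit
    linarith
  -- bounds on the minima
  have hbound : ∀ w ∈ classOf c i,
      sInf {k' : ℕ | ∃ j : Fin r, j ≠ i ∧ k' = eCC G {w} (classOf c j)} ≤ q := by
    intro w _
    refine le_trans (Nat.sInf_le ⟨k, hkne, rfl⟩) ?_
    rw [eCC_singleton']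
    exact le_trans (Finset.card_filter_le _ _) hksmall
  have hv0bound : sInf {k' : ℕ | ∃ j : Fin r, j ≠ i ∧ k' = eCC G {v0} (classOf c j)} < q :=
    lt_of_le_of_lt (Nat.sInf_le ⟨j0, hj0, rfl⟩) hcon
  have hsplit2 :
      sInf {k' : ℕ | ∃ j : Fin r, j ≠ i ∧ k' = eCC G {v0} (classOf c j)} +
        ∑ w ∈ (classOf c i).erase v0,
          sInf {k' : ℕ | ∃ j : Fin r, j ≠ i ∧ k' = eCC G {w} (classOf c j)} =
      ∑ w ∈ classOf c i,
          sInf {k' : ℕ | ∃ j : Fin r, j ≠ i ∧ k' = eCC G {w} (classOf c j)} :=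
    Finset.add_sum_erase (classOf c i)
      (fun w => sInf {k' : ℕ | ∃ j : Fin r, j ≠ i ∧ k' = eCC G {w} (classOf c j)}) hv0
  have hrest : ∑ w ∈ (classOf c i).erase v0,
      sInf {k' : ℕ | ∃ j : Fin r, j ≠ i ∧ k' = eCC G {w} (classOf c j)} ≤ (q - 1) * q := by
    have h6 := Finset.sum_le_card_nsmul ((classOf c i).erase v0) _ q
      (fun w hw => hbound w (Finset.mem_of_mem_erase hw))
    rwa [Finset.card_erase_of_mem hv0, hcq, smul_eq_mul] at h6
  obtain ⟨q', hq'⟩ : ∃ q', q = q' + 1 := ⟨q - 1, by omega⟩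
  have e4 : (q - 1) * q = q' * q' + q' := by rw [hq', Nat.add_sub_cancel]; ring
  have e5 : q ^ 2 = q' * q' + 2 * q' + 1 := by rw [hq']; ring
  linarith
end

section
/- There exists a finite simple graph G of order 14 with χ(G) = 5 such that: for every proper coloring of G with exactly 5 color classes C_1, …, C_5 ordered so that |C_1| ≤ ⋯ ≤ |C_5|, one has |C_1| = 2 and |C_2| = ⋯ = |C_5| = 3, the subgraph induced by C_1 ∪ C_i is a complete bipartite graph with bipartition (C_1, C_i) for each 2 ≤ i ≤ 5, and for every i, every v ∈ C_i and every j ≠ i the number of edges from v to C_j is at least 2; yet es_χ(G) ≤ 4 < 6 = ⌊14/5⌋·⌊14/5 + 1⌋. In particular, for r = 5 and n ≡ 4 (mod 5), conditions (1)–(3) of the necessity theorem are not sufficient for attaining the bound es_χ(G) = ⌊n/r⌋·⌊n/r + 1⌋. -/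
open Function

def adjB (u v : ℕ) : Bool :=
  if u = v then false
  else if u < 2 && v < 2 then false
  else if u < 2 || v < 2 then true
  else
    let i := (u-2)/3; let x := (u-2)%3; let j := (v-2)/3; let y := (v-2)%3
    if i = j then false
    else if x ≠ y then true
    else if x = 2 then decide ((i+j) % 2 = 0)
    else decide (2 ≤ i ∧ 2 ≤ j)

def Gc : SimpleGraph (Fin 14) where
  Adj u v := adjB u.val v.val = true
  symm := ⟨fun u v => by revert u v; decide⟩
  loopless := ⟨fun u => by revert u; decide⟩

instance : DecidableRel Gc.Adj := fun u v => instDecidableEqBool _ _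

set_option maxHeartbeats 4000000 in
theorem no_indep4 : ∀ p q r s : Fin 14, p ≠ q → p ≠ r → p ≠ s → q ≠ r → q ≠ s → r ≠ s →
    Gc.Adj p q ∨ Gc.Adj p r ∨ Gc.Adj p s ∨ Gc.Adj q r ∨ Gc.Adj q s ∨ Gc.Adj r s := by decide

theorem indep_card_le (s : Finset (Fin 14)) (hs : ∀ u ∈ s, ∀ v ∈ s, ¬ Gc.Adj u v) :
    s.card ≤ 3 := by
  by_contra h
  push_neg at h
  obtain ⟨t, hts, ht4⟩ := Finset.exists_subset_card_eq (show 4 ≤ s.card by omega)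
  obtain ⟨p, t3, hpt, rfl, h3⟩ := Finset.card_eq_succ.mp ht4
  obtain ⟨q, r, w, hqr, hqw, hrw, rfl⟩ := Finset.card_eq_three.mp h3
  have hp : p ∈ insert p ({q, r, w} : Finset (Fin 14)) := Finset.mem_insert_self _ _
  have hq : q ∈ insert p ({q, r, w} : Finset (Fin 14)) := by simp
  have hr : r ∈ insert p ({q, r, w} : Finset (Fin 14)) := by simp
  have hw : w ∈ insert p ({q, r, w} : Finset (Fin 14)) := by simp
  have hpq : p ≠ q := by rintro rfl; exact hpt (by simp)
  have hpr : p ≠ r := by rintro rfl; exact hpt (by simp)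
  have hpw : p ≠ w := by rintro rfl; exact hpt (by simp)
  rcases no_indep4 p q r w hpq hpr hpw hqr hqw hrw with h|h|h|h|h|h
  · exact hs p (hts hp) q (hts hq) h
  · exact hs p (hts hp) r (hts hr) h
  · exact hs p (hts hp) w (hts hw) h
  · exact hs q (hts hq) r (hts hr) h
  · exact hs q (hts hq) w (hts hw) h
  · exact hs r (hts hr) w (hts hw) h

-- anchors: the only independent triple containing 4 is {2,3,4}, etc.
theorem anchor4 : ∀ p q : Fin 14, p ≠ q → p ≠ 4 → q ≠ 4 → ¬Gc.Adj 4 p → ¬Gc.Adj 4 q →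
    ¬Gc.Adj p q → (p = 2 ∧ q = 3) ∨ (p = 3 ∧ q = 2) := by decide
theorem anchor7 : ∀ p q : Fin 14, p ≠ q → p ≠ 7 → q ≠ 7 → ¬Gc.Adj 7 p → ¬Gc.Adj 7 q →
    ¬Gc.Adj p q → (p = 5 ∧ q = 6) ∨ (p = 6 ∧ q = 5) := by decide
theorem anchor10 : ∀ p q : Fin 14, p ≠ q → p ≠ 10 → q ≠ 10 → ¬Gc.Adj 10 p → ¬Gc.Adj 10 q →
    ¬Gc.Adj p q → (p = 8 ∧ q = 9) ∨ (p = 9 ∧ q = 8) := by decide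
theorem anchor13 : ∀ p q : Fin 14, p ≠ q → p ≠ 13 → q ≠ 13 → ¬Gc.Adj 13 p → ¬Gc.Adj 13 q →
    ¬Gc.Adj p q → (p = 11 ∧ q = 12) ∨ (p = 12 ∧ q = 11) := by decide

theorem adj_01 : ∀ v : Fin 14, v ≠ 0 → v ≠ 1 → Gc.Adj 0 v ∧ Gc.Adj 1 v ∧ Gc.Adj v 0 ∧ Gc.Adj v 1 := by
  decide

theorem row_wit0 : ∀ v : Fin 14, v ∉ ({2,3,4} : Finset (Fin 14)) →
    ∃ w1 w2 : Fin 14, w1 ∈ ({2,3,4} : Finset (Fin 14)) ∧ w2 ∈ ({2,3,4} : Finset (Fin 14)) ∧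
      w1 ≠ w2 ∧ Gc.Adj v w1 ∧ Gc.Adj v w2 := by decide

theorem row_wit1 : ∀ v : Fin 14, v ∉ ({5,6,7} : Finset (Fin 14)) →
    ∃ w1 w2 : Fin 14, w1 ∈ ({5,6,7} : Finset (Fin 14)) ∧ w2 ∈ ({5,6,7} : Finset (Fin 14)) ∧
      w1 ≠ w2 ∧ Gc.Adj v w1 ∧ Gc.Adj v w2 := by decide

theorem row_wit2 : ∀ v : Fin 14, v ∉ ({8,9,10} : Finset (Fin 14)) →
    ∃ w1 w2 : Fin 14, w1 ∈ ({8,9,10} : Finset (Fin 14)) ∧ w2 ∈ ({8,9,10} : Finset (Fin 14)) ∧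
      w1 ≠ w2 ∧ Gc.Adj v w1 ∧ Gc.Adj v w2 := by decide

theorem row_wit3 : ∀ v : Fin 14, v ∉ ({11,12,13} : Finset (Fin 14)) →
    ∃ w1 w2 : Fin 14, w1 ∈ ({11,12,13} : Finset (Fin 14)) ∧ w2 ∈ ({11,12,13} : Finset (Fin 14)) ∧
      w1 ≠ w2 ∧ Gc.Adj v w1 ∧ Gc.Adj v w2 := by decide

theorem two_le_eCC (v w1 w2 : Fin 14) (B : Finset (Fin 14)) (h1 : w1 ∈ B) (h2 : w2 ∈ B)
    (hne : w1 ≠ w2) (a1 : Gc.Adj v w1) (a2 : Gc.Adj v w2) : 2 ≤ eCC Gc {v} B := by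
  unfold eCC
  rw [Finset.filter_congr_decidable]
  have hsub : ({(v,w1),(v,w2)} : Finset (Fin 14 × Fin 14)) ⊆
      (Finset.filter (fun p => Gc.Adj p.1 p.2) (({v} : Finset (Fin 14)) ×ˢ B)) := by
    intro p hp
    rcases Finset.mem_insert.mp hp with rfl | hp
    · exact Finset.mem_filter.mpr ⟨Finset.mem_product.mpr ⟨by simp, h1⟩, a1⟩
    · rw [Finset.mem_singleton] at hp; subst hp
      exact Finset.mem_filter.mpr ⟨Finset.mem_product.mpr ⟨by simp, h2⟩, a2⟩
  have h2c : ({(v,w1),(v,w2)} : Finset (Fin 14 × Fin 14)).card = 2 :=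
    Finset.card_pair (by simp [hne])
  exact le_trans (le_of_eq h2c.symm) (Finset.card_le_card hsub)

def col5 : Fin 14 → Fin 5 := fun v => if h : v.val < 2 then 0 else ⟨(v.val-2)/3+1, by omega⟩

theorem col5_valid : ∀ u v : Fin 14, Gc.Adj u v → col5 u ≠ col5 v := by decide

theorem Gc_colorable5 : Gc.Colorable 5 := ⟨SimpleGraph.Coloring.mk col5 (fun h => col5_valid _ _ h)⟩

theorem Gc_not_colorable4 : ¬ Gc.Colorable 4 := by
  rintro ⟨c⟩
  have hsum : (Finset.univ : Finset (Fin 14)).card =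
      ∑ i : Fin 4, (Finset.univ.filter fun v => c v = i).card :=
    Finset.card_eq_sum_card_fiberwise (fun x _ => Finset.mem_univ (c x))
  have hle : ∀ i : Fin 4, (Finset.univ.filter fun v => c v = i).card ≤ 3 := by
    intro i
    apply indep_card_le
    intro u hu v hv hadj
    have hne := c.valid hadj
    rw [Finset.mem_filter] at hu hv
    exact hne (hu.2.trans hv.2.symm)
  rw [Fin.sum_univ_four] at hsum
  have h0 := hle 0; have h1 := hle 1; have h2 := hle 2; have h3 := hle 3
  simp only [Finset.card_univ, Fintype.card_fin] at hsum
  omega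

theorem Gc_chrom : Gc.chromaticNumber = 5 := by
  have hle : Gc.chromaticNumber ≤ 5 := by
    have := Gc_colorable5.chromaticNumber_le
    exact_mod_cast this
  have hlt : (4 : ℕ∞) < Gc.chromaticNumber := by
    by_contra h
    push_neg at h
    rw [show ((4:ℕ∞)) = ((4:ℕ):ℕ∞) by norm_num,
      SimpleGraph.chromaticNumber_le_iff_colorable] at h
    exact Gc_not_colorable4 h
  refine le_antisymm hle ?_
  have := Order.add_one_le_of_lt hlt
  calc (5:ℕ∞) = 4 + 1 := by norm_num
    _ ≤ _ := this

def Fdel : Finset (Sym2 (Fin 14)) := {s(8,11), s(9,12), s(4,10), s(7,13)}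

theorem mem_Fdel (u v : Fin 14) : s(u,v) ∈ Fdel ↔
    ((u=8∧v=11)∨(u=11∧v=8)∨(u=9∧v=12)∨(u=12∧v=9)∨(u=4∧v=10)∨(u=10∧v=4)∨(u=7∧v=13)∨(u=13∧v=7)) := by
  revert u v; decide

theorem Fdel_card : Fdel.card = 4 := by
  have h1 : s(8,11) ∉ ({s(9,12), s(4,10), s(7,13)} : Finset (Sym2 (Fin 14))) := by
    simp [Sym2.eq_iff]
  have h2 : s(9,12) ∉ ({s(4,10), s(7,13)} : Finset (Sym2 (Fin 14))) := by
    simp [Sym2.eq_iff]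
  have h3 : s(4,10) ∉ ({s(7,13)} : Finset (Sym2 (Fin 14))) := by
    simp [Sym2.eq_iff]
  rw [Fdel, Finset.card_insert_of_notMem h1, Finset.card_insert_of_notMem h2,
    Finset.card_insert_of_notMem h3, Finset.card_singleton]

theorem Fdel_sub : ↑Fdel ⊆ Gc.edgeSet := by
  intro e he
  rw [Finset.mem_coe] at he
  simp only [Fdel, Finset.mem_insert, Finset.mem_singleton] at he
  rcases he with
    rfl | rfl | rfl | rfl <;> exact Gc.mem_edgeSet.mpr (by decide)

def col4 : Fin 14 → Fin 4 := fun v => if h : v.val < 2 then 0 else ⟨(v.val-2)%3+1, by omega⟩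

theorem col4_valid : ∀ u v : Fin 14, Gc.Adj u v →
    ¬((u=8∧v=11)∨(u=11∧v=8)∨(u=9∧v=12)∨(u=12∧v=9)∨(u=4∧v=10)∨(u=10∧v=4)∨(u=7∧v=13)∨(u=13∧v=7)) →
    col4 u ≠ col4 v := by decide

theorem GF_colorable : (Gc.deleteEdges ↑Fdel).Colorable 4 := by
  refine ⟨SimpleGraph.Coloring.mk col4 ?_⟩
  intro u v hadj
  rw [SimpleGraph.deleteEdges_adj, Finset.mem_coe, mem_Fdel] at hadj
  exact col4_valid u v hadj.1 hadj.2

theorem esChi_le4 : esChi Gc ≤ 4 := by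
  apply Nat.sInf_le
  refine ⟨Fdel, Fdel_sub, Fdel_card, ?_⟩
  rw [Gc_chrom]
  calc (Gc.deleteEdges ↑Fdel).chromaticNumber ≤ ((4:ℕ):ℕ∞) :=
        GF_colorable.chromaticNumber_le
    _ < 5 := by norm_num

theorem main_color (c : Gc.Coloring (Fin 5))
    (hsort : ∀ i j : Fin 5, i ≤ j → (classOf c i).card ≤ (classOf c j).card) :
    (classOf c (0 : Fin 5)).card = 2 ∧
    (∀ i : Fin 5, i ≠ 0 → (classOf c i).card = 3) ∧
    (∀ i : Fin 5, i ≠ 0 → ∀ u v : Fin 14,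
      (u ∈ classOf c (0 : Fin 5) ∨ u ∈ classOf c i) →
      (v ∈ classOf c (0 : Fin 5) ∨ v ∈ classOf c i) →
      (Gc.Adj u v ↔
        ((u ∈ classOf c (0 : Fin 5) ∧ v ∈ classOf c i) ∨
         (u ∈ classOf c i ∧ v ∈ classOf c (0 : Fin 5))))) ∧
    (∀ (i : Fin 5) (v : Fin 14), v ∈ classOf c i → ∀ j : Fin 5, j ≠ i →
      2 ≤ eCC Gc {v} (classOf c j)) := by
  have hcl : ∀ i, classOf c i = Finset.univ.filter fun v => c v = i := fun i =>
    Finset.filter_congr_decidable _ _ (fun a => Classical.propDecidable _)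
  have hmem : ∀ (v : Fin 14) (i : Fin 5), v ∈ classOf c i ↔ c v = i := by
    intro v i; rw [hcl, Finset.mem_filter]; simp
  have hsum : (classOf c 0).card + (classOf c 1).card + (classOf c 2).card
      + (classOf c 3).card + (classOf c 4).card = 14 := by
    have h := Finset.card_eq_sum_card_fiberwise
      (f := c) (s := Finset.univ) (t := Finset.univ) (fun x _ => Finset.mem_univ (c x))
    rw [Fin.sum_univ_five] at h
    simp only [Finset.card_univ, Fintype.card_fin] at h
    simp only [← hcl] at h
    omega
  have hle3 : ∀ i, (classOf c i).card ≤ 3 := by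
    intro i
    apply indep_card_le
    intro u hu v hv hadj
    exact c.valid hadj (((hmem u i).mp hu).trans ((hmem v i).mp hv).symm)
  have l0 := hle3 0; have l1 := hle3 1; have l2 := hle3 2
  have l3 := hle3 3; have l4 := hle3 4
  have s1 := hsort 0 1 (by decide); have s2 := hsort 0 2 (by decide)
  have s3 := hsort 0 3 (by decide); have s4 := hsort 0 4 (by decide)
  have hcard0 : (classOf c 0).card = 2 := by omega
  have hcard3 : ∀ i : Fin 5, i ≠ 0 → (classOf c i).card = 3 := by
    intro i hi
    have hi' : i = 1 ∨ i = 2 ∨ i = 3 ∨ i = 4 := by revert hi; revert i; decide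
    rcases hi' with rfl | rfl | rfl | rfl <;> omega
  have hc01 : c 1 = c 0 := by
    by_contra hne
    have hsub : classOf c (c 0) ⊆ {0} := by
      intro v hv
      rw [hmem] at hv
      rw [Finset.mem_singleton]
      by_contra hv0
      have hv1 : v ≠ 1 := by rintro rfl; exact hne hv
      exact c.valid (adj_01 v hv0 hv1).2.2.1 hv
    have hle1 : (classOf c (c 0)).card ≤ 1 :=
      le_trans (Finset.card_le_card hsub) (by simp)
    have h2 : 2 ≤ (classOf c (c 0)).card := by
      rcases eq_or_ne (c 0) 0 with h | h
      · rw [h]; omega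
      · rw [hcard3 _ h]; omega
    omega
  have hcls0eq : classOf c (c 0) = {0, 1} := by
    apply Finset.Subset.antisymm
    · intro v hv
      rw [hmem] at hv
      simp only [Finset.mem_insert, Finset.mem_singleton]
      by_contra h
      push_neg at h
      exact c.valid (adj_01 v h.1 h.2).2.2.1 hv
    · intro v hv
      simp only [Finset.mem_insert, Finset.mem_singleton] at hv
      rcases hv with rfl | rfl
      · exact (hmem 0 (c 0)).mpr rfl
      · exact (hmem 1 (c 0)).mpr hc01
  have hc0 : c 0 = 0 := by
    by_contra h
    have h3 := hcard3 _ h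
    rw [hcls0eq] at h3
    have : ({0, 1} : Finset (Fin 14)).card = 2 := by decide
    omega
  have hcls0 : classOf c 0 = {0, 1} := by rw [← hc0]; exact hcls0eq
  have hcw : ∀ w : Fin 14, w ≠ 0 → w ≠ 1 → c w ≠ 0 := by
    intro w h0 h1 hc
    have hw : w ∈ classOf c 0 := (hmem w 0).mpr hc
    rw [hcls0] at hw
    simp only [Finset.mem_insert, Finset.mem_singleton] at hw
    tauto
  have classAt : ∀ (w a b : Fin 14),
      (∀ p q : Fin 14, p ≠ q → p ≠ w → q ≠ w → ¬Gc.Adj w p → ¬Gc.Adj w q → ¬Gc.Adj p q →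
        (p = a ∧ q = b) ∨ (p = b ∧ q = a)) →
      c w ≠ 0 → classOf c (c w) = {a, b, w} := by
    intro w a b H hw0
    have h3 := hcard3 _ hw0
    obtain ⟨x, y, z, hxy, hxz, hyz, hcls⟩ := Finset.card_eq_three.mp h3
    have hnon : ∀ u v : Fin 14, u ∈ classOf c (c w) → v ∈ classOf c (c w) →
        ¬Gc.Adj u v := by
      intro u v hu hv hadj
      exact c.valid hadj (((hmem u _).mp hu).trans ((hmem v _).mp hv).symm)
    have hwmem : w ∈ classOf c (c w) := (hmem w _).mpr rfl
    have hxm : x ∈ classOf c (c w) := by rw [hcls]; simp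
    have hym : y ∈ classOf c (c w) := by rw [hcls]; simp
    have hzm : z ∈ classOf c (c w) := by rw [hcls]; simp
    have hwm2 : w ∈ classOf c (c w) := hwmem
    rw [hcls] at hwmem
    simp only [Finset.mem_insert, Finset.mem_singleton] at hwmem
    rw [hcls]
    rcases hwmem with h | h | h
    · subst h
      rcases H y z hyz (Ne.symm hxy) (Ne.symm hxz)
        (hnon w y hwm2 hym) (hnon w z hwm2 hzm) (hnon y z hym hzm) with ⟨rfl, rfl⟩ | ⟨rfl, rfl⟩
      · ext t; simp only [Finset.mem_insert, Finset.mem_singleton]; try tauto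
      · ext t; simp only [Finset.mem_insert, Finset.mem_singleton]; try tauto
    · subst h
      rcases H x z hxz hxy (Ne.symm hyz)
        (hnon w x hwm2 hxm) (hnon w z hwm2 hzm) (hnon x z hxm hzm) with ⟨rfl, rfl⟩ | ⟨rfl, rfl⟩
      · ext t; simp only [Finset.mem_insert, Finset.mem_singleton]; try tauto
      · ext t; simp only [Finset.mem_insert, Finset.mem_singleton]; try tauto
    · subst h
      rcases H x y hxy hxz hyz
        (hnon w x hwm2 hxm) (hnon w y hwm2 hym) (hnon x y hxm hym) with ⟨rfl, rfl⟩ | ⟨rfl, rfl⟩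
      · ext t; simp only [Finset.mem_insert, Finset.mem_singleton]; try tauto
      · ext t; simp only [Finset.mem_insert, Finset.mem_singleton]; try tauto
  have hc4 : c 4 ≠ 0 := hcw 4 (by decide) (by decide)
  have hc7 : c 7 ≠ 0 := hcw 7 (by decide) (by decide)
  have hc10 : c 10 ≠ 0 := hcw 10 (by decide) (by decide)
  have hc13 : c 13 ≠ 0 := hcw 13 (by decide) (by decide)
  have e4 : classOf c (c 4) = {2, 3, 4} := classAt 4 2 3 anchor4 hc4
  have e7 : classOf c (c 7) = {5, 6, 7} := classAt 7 5 6 anchor7 hc7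
  have e10 : classOf c (c 10) = {8, 9, 10} := classAt 10 8 9 anchor10 hc10
  have e13 : classOf c (c 13) = {11, 12, 13} := classAt 13 11 12 anchor13 hc13
  have dmem : ∀ (w w' : Fin 14) (R : Finset (Fin 14)), classOf c (c w) = R →
      w' ∉ R → c w' ≠ c w := by
    intro w w' R hR hnot hcc
    exact hnot (hR ▸ (hmem w' (c w)).mpr hcc)
  have d47 : c 7 ≠ c 4 := dmem 4 7 _ e4 (by decide)
  have d410 : c 10 ≠ c 4 := dmem 4 10 _ e4 (by decide)
  have d413 : c 13 ≠ c 4 := dmem 4 13 _ e4 (by decide)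
  have d710 : c 10 ≠ c 7 := dmem 7 10 _ e7 (by decide)
  have d713 : c 13 ≠ c 7 := dmem 7 13 _ e7 (by decide)
  have d1013 : c 13 ≠ c 10 := dmem 10 13 _ e10 (by decide)
  have hcover : ∀ i : Fin 5, i ≠ 0 → i = c 4 ∨ i = c 7 ∨ i = c 10 ∨ i = c 13 := by
    intro i hi
    have b4 := (c 4).isLt; have b7 := (c 7).isLt
    have b10 := (c 10).isLt; have b13 := (c 13).isLt; have bi := i.isLt
    have nv : ∀ a b : Fin 5, a ≠ b → a.val ≠ b.val := by
      intro a b h hv; exact h (Fin.ext hv)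
    have n4 := nv _ _ hc4; have n7 := nv _ _ hc7
    have n10 := nv _ _ hc10; have n13 := nv _ _ hc13; have ni := nv _ _ hi
    have m47 := nv _ _ d47; have m410 := nv _ _ d410; have m413 := nv _ _ d413
    have m710 := nv _ _ d710; have m713 := nv _ _ d713; have m1013 := nv _ _ d1013
    simp only [Fin.val_zero] at n4 n7 n10 n13 ni
    have : i.val = (c 4).val ∨ i.val = (c 7).val ∨ i.val = (c 10).val ∨
        i.val = (c 13).val := by omega
    rcases this with h | h | h | h
    · exact Or.inl (Fin.ext h)
    · exact Or.inr (Or.inl (Fin.ext h))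
    · exact Or.inr (Or.inr (Or.inl (Fin.ext h)))
    · exact Or.inr (Or.inr (Or.inr (Fin.ext h)))
  refine ⟨hcard0, hcard3, ?_, ?_⟩
  · -- condition (2)
    intro i hi u v hu hv
    rcases hcover i hi with rfl | rfl | rfl | rfl
    · rw [hcls0, e4] at hu hv ⊢; revert hu hv; revert u v; decide
    · rw [hcls0, e7] at hu hv ⊢; revert hu hv; revert u v; decide
    · rw [hcls0, e10] at hu hv ⊢; revert hu hv; revert u v; decide
    · rw [hcls0, e13] at hu hv ⊢; revert hu hv; revert u v; decide
  · -- condition (3)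
    intro i v hv j hj
    rcases eq_or_ne j 0 with rfl | hj0
    · have hi0 : i ≠ 0 := Ne.symm hj
      have hcv : c v = i := (hmem v i).mp hv
      have hv0 : v ≠ 0 := by rintro rfl; rw [hc0] at hcv; exact hi0 hcv.symm
      have hv1 : v ≠ 1 := by
        rintro rfl; rw [hc01, hc0] at hcv; exact hi0 hcv.symm
      have m0 : (0 : Fin 14) ∈ classOf c 0 := by rw [hcls0]; decide
      have m1 : (1 : Fin 14) ∈ classOf c 0 := by rw [hcls0]; decide
      exact two_le_eCC v 0 1 _ m0 m1 (by decide)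
        (adj_01 v hv0 hv1).2.2.1 (adj_01 v hv0 hv1).2.2.2
    · have hcv : c v = i := (hmem v i).mp hv
      have hvn : ∀ (w : Fin 14) (R : Finset (Fin 14)), j = c w →
          classOf c (c w) = R → v ∉ R := by
        intro w R hj' hR hvR
        rw [← hR] at hvR
        have h1 : c v = c w := (hmem v (c w)).mp hvR
        rw [← hj'] at h1
        exact hj (h1.symm.trans hcv)
      rcases hcover j hj0 with hj4 | hj7 | hj10 | hj13
      · obtain ⟨w1, w2, m1, m2, hne, a1, a2⟩ :=
          row_wit0 v (hvn 4 _ hj4 e4)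
        exact two_le_eCC v w1 w2 _ (by rw [hj4, e4]; exact m1)
          (by rw [hj4, e4]; exact m2) hne a1 a2
      · obtain ⟨w1, w2, m1, m2, hne, a1, a2⟩ :=
          row_wit1 v (hvn 7 _ hj7 e7)
        exact two_le_eCC v w1 w2 _ (by rw [hj7, e7]; exact m1)
          (by rw [hj7, e7]; exact m2) hne a1 a2
      · obtain ⟨w1, w2, m1, m2, hne, a1, a2⟩ :=
          row_wit2 v (hvn 10 _ hj10 e10)
        exact two_le_eCC v w1 w2 _ (by rw [hj10, e10]; exact m1)
          (by rw [hj10, e10]; exact m2) hne a1 a2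
      · obtain ⟨w1, w2, m1, m2, hne, a1, a2⟩ :=
          row_wit3 v (hvn 13 _ hj13 e13)
        exact two_le_eCC v w1 w2 _ (by rw [hj13, e13]; exact m1)
          (by rw [hj13, e13]; exact m2) hne a1 a2

/-- There is a graph `G` of order 14 with `χ(G) = 5` satisfying
conditions (1)-(3) of the necessity theorem for every proper coloring with exactly
5 color classes ordered by nondecreasing size, yet `es_χ(G) ≤ 4 < 6 = ⌊14/5⌋·⌊14/5+1⌋`;
so those conditions are not sufficient for `r = 5`, `n ≡ 4 (mod 5)`. -/
theorem exists_order14_counterexample :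
    ∃ G : SimpleGraph (Fin 14), G.chromaticNumber = 5 ∧
      (∀ c : G.Coloring (Fin 5), Surjective c →
        (∀ i j : Fin 5, i ≤ j → (classOf c i).card ≤ (classOf c j).card) →
        ((classOf c (0 : Fin 5)).card = 2 ∧
         (∀ i : Fin 5, i ≠ 0 → (classOf c i).card = 3) ∧
         (∀ i : Fin 5, i ≠ 0 → ∀ u v : Fin 14,
           (u ∈ classOf c (0 : Fin 5) ∨ u ∈ classOf c i) →
           (v ∈ classOf c (0 : Fin 5) ∨ v ∈ classOf c i) →
           (G.Adj u v ↔
             ((u ∈ classOf c (0 : Fin 5) ∧ v ∈ classOf c i) ∨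
              (u ∈ classOf c i ∧ v ∈ classOf c (0 : Fin 5))))) ∧
         (∀ (i : Fin 5) (v : Fin 14), v ∈ classOf c i → ∀ j : Fin 5, j ≠ i →
           2 ≤ eCC G {v} (classOf c j)))) ∧
      esChi G ≤ 4 ∧ esChi G < 14 / 5 * (14 / 5 + 1) := by
  refine ⟨Gc, Gc_chrom, ?_, esChi_le4, ?_⟩
  · intro c _ hsort
    exact main_color c hsort
  · have h6 : (14 / 5 * (14 / 5 + 1) : ℕ) = 6 := by norm_num
    rw [h6]
    exact lt_of_le_of_lt esChi_le4 (by norm_num)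
end
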